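/- Let n ≥ 3 and let a ∈ A_n be a doubly pure element with ‖a‖ = 1. Then the real-linear map from the quaternions ℍ to A_n determined by 1 ↦ e_0, i ↦ ã, j ↦ a, k ↦ ẽ_0 is an injective ℝ-algebra homomorphism; in particular its image, the linear span of {e_0, ã, a, ẽ_0}, is a 4-dimensional subalgebra of A_n isomorphic to ℍ. -/

import Mathlib

noncomputable section

open scoped Quaternion

/-- The Cayley–Dickson algebra `A n = ℝ^(2^n)` as a type. -/
def CD : ℕ → Type
  | 0 => ℝ
  | n + 1 => CD n × CD n

namespace CD

instance instAddCommGroup : (n : ℕ) → AddCommGroup (CD n)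
  | 0 => inferInstanceAs (AddCommGroup ℝ)
  | n + 1 =>
    letI := instAddCommGroup n
    inferInstanceAs (AddCommGroup (CD n × CD n))

instance instModule : (n : ℕ) → Module ℝ (CD n)
  | 0 => inferInstanceAs (Module ℝ ℝ)
  | n + 1 =>
    letI := instModule n
    inferInstanceAs (Module ℝ (CD n × CD n))

/-- Conjugation in the Cayley–Dickson algebra. -/
def conj : {n : ℕ} → CD n → CD n
  | 0, x => x
  | _ + 1, x => (conj x.1, -x.2)

/-- Cayley–Dickson multiplication. -/
def mul : {n : ℕ} → CD n → CD n → CD n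
  | 0, x, y => Mul.mul (α := ℝ) x y
  | _ + 1, x, y =>
    (mul x.1 y.1 - mul (conj y.2) x.2, mul y.2 x.1 + mul x.2 (conj y.1))

instance instMul (n : ℕ) : Mul (CD n) := ⟨mul⟩

/-- The multiplicative unit `e₀`. -/
def one : {n : ℕ} → CD n
  | 0 => (1 : ℝ)
  | _ + 1 => (one, 0)

instance instOne (n : ℕ) : One (CD n) := ⟨one⟩

/-- The Euclidean inner product on `A n = ℝ^(2^n)`. -/
def inner : {n : ℕ} → CD n → CD n → ℝ
  | 0, x, y => (x * y : ℝ)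
  | _ + 1, x, y => inner x.1 y.1 + inner x.2 y.2

/-- The Euclidean norm on `A n = ℝ^(2^n)`. -/
def norm {n : ℕ} (x : CD n) : ℝ := Real.sqrt (inner x x)

/-- `ã = (-a₂, a₁)`. -/
def tilde {n : ℕ} (a : CD (n + 1)) : CD (n + 1) := (-a.2, a.1)

/-- `ẽ₀ = (0, e₀)`. -/
def etilde (n : ℕ) : CD (n + 1) := ((0 : CD n), (1 : CD n))

/-- An element is pure if its conjugate is its negative. -/
def IsPure {n : ℕ} (a : CD n) : Prop := conj a = -a

/-- An element of `A (n+1)` is doubly pure if both of its coordinates are pure. -/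
def IsDoublyPure {n : ℕ} (a : CD (n + 1)) : Prop := IsPure a.1 ∧ IsPure a.2

/-- The associator `(a,b,c) = (ab)c - a(bc)`. -/
def assoc {n : ℕ} (a b c : CD n) : CD n := a * b * c - a * (b * c)

/-- An element is alternative if `(a,a,x) = 0` for all `x`. -/
def IsAlternative {n : ℕ} (a : CD n) : Prop := ∀ x : CD n, assoc a a x = 0

/-- An element is strongly alternative if `(a,a,x) = 0` and `(a,x,x) = 0` for all `x`. -/
def IsStronglyAlternative {n : ℕ} (a : CD n) : Prop :=
  (∀ x : CD n, assoc a a x = 0) ∧ (∀ x : CD n, assoc a x x = 0)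

/-- The pure (imaginary) part of an element. -/
def im {n : ℕ} (a : CD n) : CD n := (2⁻¹ : ℝ) • (a - conj a)

/-- `H a`, the span of `{e₀, ã, a, ẽ₀}`. -/
def H {n : ℕ} (a : CD (n + 1)) : Submodule ℝ (CD (n + 1)) :=
  Submodule.span ℝ {(1 : CD (n + 1)), tilde a, a, etilde n}

/-- The orthogonal complement of `H a`. -/
def Hperp {n : ℕ} (a : CD (n + 1)) : Set (CD (n + 1)) :=
  {x | ∀ y ∈ H a, inner y x = 0}

end CD

namespace CD
variable {n : ℕ}

theorem ext2 {x y : CD (n + 1)} (h1 : x.1 = y.1) (h2 : x.2 = y.2) : x = y := Prod.ext h1 h2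

@[simp] theorem fst_add (x y : CD (n+1)) : (x + y).1 = x.1 + y.1 := rfl
@[simp] theorem snd_add (x y : CD (n+1)) : (x + y).2 = x.2 + y.2 := rfl
@[simp] theorem fst_neg (x : CD (n+1)) : (-x).1 = -x.1 := rfl
@[simp] theorem snd_neg (x : CD (n+1)) : (-x).2 = -x.2 := rfl
@[simp] theorem fst_sub (x y : CD (n+1)) : (x - y).1 = x.1 - y.1 := rfl
@[simp] theorem snd_sub (x y : CD (n+1)) : (x - y).2 = x.2 - y.2 := rfl
@[simp] theorem fst_smul (r : ℝ) (x : CD (n+1)) : (r • x).1 = r • x.1 := rfl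
@[simp] theorem snd_smul (r : ℝ) (x : CD (n+1)) : (r • x).2 = r • x.2 := rfl
@[simp] theorem fst_zero : (0 : CD (n+1)).1 = 0 := rfl
@[simp] theorem snd_zero : (0 : CD (n+1)).2 = 0 := rfl
@[simp] theorem fst_one : (1 : CD (n+1)).1 = 1 := rfl
@[simp] theorem snd_one : (1 : CD (n+1)).2 = 0 := rfl
@[simp] theorem conj_fst (x : CD (n+1)) : (conj x).1 = conj x.1 := rfl
@[simp] theorem conj_snd (x : CD (n+1)) : (conj x).2 = -x.2 := rfl
@[simp] theorem mul_fst (x y : CD (n+1)) : (x * y).1 = x.1 * y.1 - conj y.2 * x.2 := rfl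
@[simp] theorem mul_snd (x y : CD (n+1)) : (x * y).2 = y.2 * x.1 + x.2 * conj y.1 := rfl
@[simp] theorem inner_def (x y : CD (n+1)) : inner x y = inner x.1 y.1 + inner x.2 y.2 := rfl

end CD

namespace CD

theorem real_mul_add (x y z : ℝ) : x * (y + z) = x * y + x * z := mul_add x y z
theorem real_add_mul (y z x : ℝ) : (y + z) * x = y * x + z * x := add_mul y z x
theorem real_mul_smul (r x y : ℝ) : x * (r * y) = r * (x * y) := by ring
theorem real_smul_mul (r x y : ℝ) : (r * x) * y = r * (x * y) := by ring
theorem real_one_mul (x : ℝ) : 1 * x = x := one_mul x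
theorem real_mul_one (x : ℝ) : x * 1 = x := mul_one x
theorem real_sq (x : ℝ) : x * x = (x * x) * 1 := by ring

theorem conj_add' {n : ℕ} : ∀ x y : CD n, conj (x + y) = conj x + conj y := by
  induction n with
  | zero => intro x y; rfl
  | succ n ih => intro x y; exact ext2 (by simp [ih]) (by simp [neg_add, add_comm])

theorem conj_smul' {n : ℕ} : ∀ (r : ℝ) (x : CD n), conj (r • x) = r • conj x := by
  induction n with
  | zero => intro r x; rfl
  | succ n ih => intro r x; exact ext2 (by simp [ih]) (by simp)

theorem conj_zero' {n : ℕ} : conj (0 : CD n) = 0 := by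
  induction n with
  | zero => rfl
  | succ n ih => exact ext2 (by simp [ih]) (by simp)

theorem conj_neg' {n : ℕ} : ∀ x : CD n, conj (-x) = - conj x := by
  induction n with
  | zero => intro x; rfl
  | succ n ih => intro x; exact ext2 (by simp [ih]) (by simp)

theorem conj_conj' {n : ℕ} : ∀ x : CD n, conj (conj x) = x := by
  induction n with
  | zero => intro x; rfl
  | succ n ih => intro x; exact ext2 (by simp [ih]) (by simp)

theorem conj_one' {n : ℕ} : conj (1 : CD n) = 1 := by
  induction n with
  | zero => rfl
  | succ n ih => exact ext2 (by simp [ih]) (by simp)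

theorem distrib' {n : ℕ} : ∀ x y z : CD n,
    x * (y + z) = x * y + x * z ∧ (y + z) * x = y * x + z * x := by
  induction n with
  | zero =>
    intro x y z
    exact ⟨real_mul_add x y z, real_add_mul y z x⟩
  | succ n ih =>
    intro x y z
    constructor <;> apply ext2 <;>
      simp [conj_add', (ih _ _ _).1, (ih _ _ _).2] <;> abel

theorem mul_add' {n : ℕ} (x y z : CD n) : x * (y + z) = x * y + x * z := (distrib' x y z).1
theorem add_mul' {n : ℕ} (x y z : CD n) : (y + z) * x = y * x + z * x := (distrib' x y z).2

theorem smul_assoc' {n : ℕ} : ∀ (r : ℝ) (x y : CD n),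
    x * (r • y) = r • (x * y) ∧ (r • x) * y = r • (x * y) := by
  induction n with
  | zero =>
    intro r x y
    exact ⟨real_mul_smul r x y, real_smul_mul r x y⟩
  | succ n ih =>
    intro r x y
    constructor <;> apply ext2 <;>
      simp [conj_smul', (ih _ _ _).1, (ih _ _ _).2, smul_sub, smul_add]

theorem mul_smul' {n : ℕ} (r : ℝ) (x y : CD n) : x * (r • y) = r • (x * y) := (smul_assoc' r x y).1
theorem smul_mul' {n : ℕ} (r : ℝ) (x y : CD n) : (r • x) * y = r • (x * y) := (smul_assoc' r x y).2

theorem mul_zero' {n : ℕ} (x : CD n) : x * 0 = 0 := by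
  have := mul_smul' (0:ℝ) x 0; simpa using this
theorem zero_mul' {n : ℕ} (x : CD n) : 0 * x = 0 := by
  have := smul_mul' (0:ℝ) 0 x; simpa using this

theorem neg_mul' {n : ℕ} (x y : CD n) : (-x) * y = -(x * y) := by
  have := smul_mul' (-1:ℝ) x y; simpa using this
theorem mul_neg' {n : ℕ} (x y : CD n) : x * (-y) = -(x * y) := by
  have := mul_smul' (-1:ℝ) x y; simpa using this

theorem one_mul_mul_one {n : ℕ} : ∀ x : CD n, 1 * x = x ∧ x * 1 = x := by
  induction n with
  | zero => intro x; exact ⟨real_one_mul x, real_mul_one x⟩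
  | succ n ih =>
    intro x
    constructor <;> apply ext2 <;>
      simp [conj_one', conj_zero', zero_mul', mul_zero', (ih _).1, (ih _).2]

theorem one_mul' {n : ℕ} (x : CD n) : 1 * x = x := (one_mul_mul_one x).1
theorem mul_one' {n : ℕ} (x : CD n) : x * 1 = x := (one_mul_mul_one x).2

theorem conj_mul_self' {n : ℕ} : ∀ x : CD n,
    conj x * x = inner x x • 1 ∧ x * conj x = inner x x • 1 := by
  induction n with
  | zero =>
    intro x
    exact ⟨real_sq x, real_sq x⟩
  | succ n ih =>
    intro x
    constructor <;> apply ext2 <;>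
      simp [conj_neg', conj_conj', (ih _).1, (ih _).2,
        neg_mul', mul_neg', add_smul, sub_eq_add_neg]

theorem real_mul_comm (x y : ℝ) : x * y = y * x := mul_comm x y
theorem real_inner_add (x y z : ℝ) : x * (y + z) = x * y + x * z := by ring
theorem real_inner_smul (r x y : ℝ) : x * (r * y) = r * (x * y) := by ring

theorem inner_comm' {n : ℕ} : ∀ x y : CD n, inner x y = inner y x := by
  induction n with
  | zero => intro x y; exact real_mul_comm x y
  | succ n ih => intro x y; simp [ih x.1, ih x.2]

theorem inner_add_right' {n : ℕ} : ∀ x y z : CD n, inner x (y + z) = inner x y + inner x z := by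
  induction n with
  | zero => intro x y z; exact real_inner_add x y z
  | succ n ih => intro x y z; simp [ih]; ring

theorem inner_smul_right' {n : ℕ} : ∀ (r : ℝ) (x y : CD n), inner x (r • y) = r * inner x y := by
  induction n with
  | zero => intro r x y; exact real_inner_smul r x y
  | succ n ih => intro r x y; simp [ih]; ring

theorem inner_zero_right' {n : ℕ} (x : CD n) : inner x (0 : CD n) = 0 := by
  have := inner_smul_right' (0:ℝ) x 0; simpa using this

theorem inner_neg_right' {n : ℕ} (x y : CD n) : inner x (-y) = - inner x y := by
  have := inner_smul_right' (-1:ℝ) x y; simpa using this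

theorem inner_zero_left' {n : ℕ} (x : CD n) : inner (0 : CD n) x = 0 := by
  rw [inner_comm']; exact inner_zero_right' x

theorem inner_one_one {n : ℕ} : inner (1 : CD n) (1 : CD n) = 1 := by
  induction n with
  | zero => exact mul_one (1:ℝ)
  | succ n ih => simp [ih, inner_zero_right']

theorem inner_one_conj {n : ℕ} : ∀ x : CD n, inner (1 : CD n) (conj x) = inner 1 x := by
  induction n with
  | zero => intro x; rfl
  | succ n ih =>
    intro x
    simp [ih, inner_zero_right', inner_neg_right', inner_zero_left']

theorem inner_one_pure {n : ℕ} {x : CD n} (h : conj x = -x) : inner (1 : CD n) x = 0 := by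
  have h1 := inner_one_conj x
  rw [h, inner_neg_right'] at h1
  linarith

example (a b : CD 3) : inner (a + b) a = inner a a + inner b a := by
  rw [inner_comm', inner_add_right']; rw [inner_comm' a a, inner_comm' a b]

theorem sq_pure {n : ℕ} {x : CD n} (h : conj x = -x) :
    x * x = -(inner x x • (1 : CD n)) := by
  have hc := (conj_mul_self' x).1
  rw [h, neg_mul'] at hc
  exact neg_eq_iff_eq_neg.mp hc

@[simp] theorem tilde_fst {n : ℕ} (a : CD (n+1)) : (tilde a).1 = -a.2 := rfl
@[simp] theorem tilde_snd {n : ℕ} (a : CD (n+1)) : (tilde a).2 = a.1 := rfl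
@[simp] theorem etilde_fst {n : ℕ} : (etilde n).1 = 0 := rfl
@[simp] theorem etilde_snd {n : ℕ} : (etilde n).2 = 1 := rfl

section Table

variable {n : ℕ} {a : CD (n+1)}


theorem tab_aa (hp1 : conj a.1 = -a.1) (hp2 : conj a.2 = -a.2)
    (hnn : inner a.1 a.1 + inner a.2 a.2 = 1) : a * a = -1 := by
  apply ext2
  · simp only [mul_fst, fst_neg, fst_one, hp2, neg_mul', sub_neg_eq_add,
      sq_pure hp1, sq_pure hp2]
    rw [← neg_add, ← add_smul, hnn, one_smul]
  · simp [hp1, mul_neg']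

theorem tab_tt (hp1 : conj a.1 = -a.1) (hp2 : conj a.2 = -a.2)
    (hnn : inner a.1 a.1 + inner a.2 a.2 = 1) : tilde a * tilde a = -1 := by
  apply ext2
  · simp only [mul_fst, tilde_fst, tilde_snd, fst_neg, fst_one, hp1, neg_mul', mul_neg',
      neg_neg, sub_neg_eq_add, sq_pure hp1, sq_pure hp2]
    rw [sub_eq_add_neg, ← neg_add, ← add_smul, add_comm (inner a.2 a.2), hnn, one_smul]
  · simp [conj_neg', hp2, mul_neg', neg_mul']

theorem tab_ee (hp1 : conj a.1 = -a.1) (hp2 : conj a.2 = -a.2)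
    (hnn : inner a.1 a.1 + inner a.2 a.2 = 1) : etilde n * etilde n = -1 := by
  apply ext2
  · simp [conj_one', one_mul', zero_mul']
  · simp [conj_zero', mul_zero', zero_mul']

theorem tab_ta (hp1 : conj a.1 = -a.1) (hp2 : conj a.2 = -a.2)
    (hnn : inner a.1 a.1 + inner a.2 a.2 = 1) : tilde a * a = etilde n := by
  apply ext2
  · simp [hp2, neg_mul']
  · simp only [mul_snd, tilde_fst, tilde_snd, etilde_snd, mul_neg', sq_pure hp2,
      (conj_mul_self' a.1).2, neg_neg]
    rw [← add_smul, add_comm (inner a.2 a.2), hnn, one_smul]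

theorem tab_at (hp1 : conj a.1 = -a.1) (hp2 : conj a.2 = -a.2)
    (hnn : inner a.1 a.1 + inner a.2 a.2 = 1) : a * tilde a = -etilde n := by
  apply ext2
  · simp [hp1, mul_neg', neg_mul']
  · simp only [mul_snd, tilde_fst, tilde_snd, snd_neg, etilde_snd, conj_neg', hp2,
      neg_neg, sq_pure hp1, sq_pure hp2]
    rw [← neg_add, ← add_smul, hnn, one_smul]

theorem tab_ae (hp1 : conj a.1 = -a.1) (hp2 : conj a.2 = -a.2)
    (hnn : inner a.1 a.1 + inner a.2 a.2 = 1) : a * etilde n = tilde a := by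
  apply ext2
  · simp [mul_zero', conj_one', one_mul']
  · simp [one_mul', conj_zero', mul_zero']

theorem tab_ea (hp1 : conj a.1 = -a.1) (hp2 : conj a.2 = -a.2)
    (hnn : inner a.1 a.1 + inner a.2 a.2 = 1) : etilde n * a = -tilde a := by
  apply ext2
  · simp [zero_mul', hp2, neg_mul', mul_one']
  · simp [mul_zero', one_mul', hp1]

theorem tab_et (hp1 : conj a.1 = -a.1) (hp2 : conj a.2 = -a.2)
    (hnn : inner a.1 a.1 + inner a.2 a.2 = 1) : etilde n * tilde a = a := by
  apply ext2
  · simp [zero_mul', hp1, neg_mul', mul_one']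
  · simp [mul_zero', one_mul', conj_neg', hp2]

theorem tab_te (hp1 : conj a.1 = -a.1) (hp2 : conj a.2 = -a.2)
    (hnn : inner a.1 a.1 + inner a.2 a.2 = 1) : tilde a * etilde n = -a := by
  apply ext2
  · simp [mul_zero', conj_one', one_mul']
  · simp [one_mul', conj_zero', mul_zero']

end Table

theorem inner_neg_left' {n : ℕ} (x y : CD n) : inner (-x) y = - inner x y := by
  rw [inner_comm', inner_neg_right', inner_comm']

open scoped Quaternion in
/-- The quaternion `i`. -/
def qi : ℍ := ⟨0,1,0,0⟩
open scoped Quaternion in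
/-- The quaternion `j`. -/
def qj : ℍ := ⟨0,0,1,0⟩
open scoped Quaternion in
/-- The quaternion `k`. -/
def qk : ℍ := ⟨0,0,0,1⟩

open scoped Quaternion in
theorem main_aux (n : ℕ) (a : CD (n + 1)) (ha : IsDoublyPure a) (hnorm : norm a = 1) :
    ∃ φ : ℍ → CD (n + 1),
      (∀ q : ℍ, φ q =
        q.re • (1 : CD (n + 1)) + q.imI • tilde a + q.imJ • a + q.imK • etilde n) ∧
      Function.Injective φ ∧
      φ 1 = 1 ∧
      (∀ p q : ℍ, φ (p * q) = φ p * φ q) ∧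
      (∀ p q : ℍ, φ (p + q) = φ p + φ q) ∧
      (∀ (r : ℝ) (p : ℍ), φ (r • p) = r • φ p) ∧
      Set.range φ =
        (Submodule.span ℝ ({1, tilde a, a, etilde n} : Set (CD (n + 1))) : Set (CD (n + 1))) ∧
      Module.finrank ℝ
        (Submodule.span ℝ ({1, tilde a, a, etilde n} : Set (CD (n + 1)))) = 4 := by
  have hp1 : conj a.1 = -a.1 := ha.1
  have hp2 : conj a.2 = -a.2 := ha.2
  have hia : inner a a = 1 := Real.sqrt_eq_one.mp hnorm
  have hnn : inner a.1 a.1 + inner a.2 a.2 = 1 := by simpa using hia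
  set φ : ℍ → CD (n + 1) := fun q =>
    q.re • (1 : CD (n + 1)) + q.imI • tilde a + q.imJ • a + q.imK • etilde n with hφ
  have hadd : ∀ p q : ℍ, φ (p + q) = φ p + φ q := by
    intro p q
    simp only [hφ, Quaternion.re_add, Quaternion.imI_add, Quaternion.imJ_add,
      Quaternion.imK_add]
    module
  have hsmul : ∀ (r : ℝ) (p : ℍ), φ (r • p) = r • φ p := by
    intro r p
    simp only [hφ, Quaternion.re_smul, Quaternion.imI_smul, Quaternion.imJ_smul,
      Quaternion.imK_smul, smul_eq_mul]
    module
  have hmul : ∀ p q : ℍ, φ (p * q) = φ p * φ q := by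
    intro p q
    simp only [hφ, Quaternion.re_mul, Quaternion.imI_mul, Quaternion.imJ_mul,
      Quaternion.imK_mul, mul_add', add_mul', mul_smul', smul_mul', one_mul', mul_one',
      tab_aa hp1 hp2 hnn, tab_tt hp1 hp2 hnn, tab_ee hp1 hp2 hnn, tab_ta hp1 hp2 hnn,
      tab_at hp1 hp2 hnn, tab_ae hp1 hp2 hnn, tab_ea hp1 hp2 hnn, tab_et hp1 hp2 hnn,
      tab_te hp1 hp2 hnn, smul_neg, smul_smul]
    module
  have hone : φ 1 = 1 := by simp [hφ]
  -- orthonormality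
  have i11 : inner (1 : CD (n+1)) 1 = 1 := inner_one_one
  have itt : inner (tilde a) (tilde a) = 1 := by
    simp only [inner_def, tilde_fst, tilde_snd, inner_neg_left', inner_neg_right', neg_neg]
    rw [add_comm]; exact hnn
  have iee : inner (etilde n) (etilde n) = 1 := by
    simp [inner_zero_left', inner_one_one]
  have i1t : inner (1 : CD (n+1)) (tilde a) = 0 := by
    simp [inner_neg_right', inner_one_pure hp2, inner_zero_left']
  have i1a : inner (1 : CD (n+1)) a = 0 := by
    simp [inner_one_pure hp1, inner_zero_left']
  have i1e : inner (1 : CD (n+1)) (etilde n) = 0 := by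
    simp [inner_zero_right', inner_zero_left']
  have ita : inner (tilde a) a = 0 := by
    simp only [inner_def, tilde_fst, tilde_snd, inner_neg_left']
    rw [inner_comm' a.2 a.1]; ring
  have ite : inner (tilde a) (etilde n) = 0 := by
    simp only [inner_def, tilde_fst, tilde_snd, etilde_fst, etilde_snd, inner_zero_right']
    rw [inner_comm' a.1 1, inner_one_pure hp1]; ring
  have iae : inner a (etilde n) = 0 := by
    simp only [inner_def, etilde_fst, etilde_snd, inner_zero_right']
    rw [inner_comm' a.2 1, inner_one_pure hp2]; ring
  have it1 : inner (tilde a) (1 : CD (n+1)) = 0 := by rw [inner_comm']; exact i1t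
  have ia1 : inner a (1 : CD (n+1)) = 0 := by rw [inner_comm']; exact i1a
  have ie1 : inner (etilde n) (1 : CD (n+1)) = 0 := by rw [inner_comm']; exact i1e
  have iat : inner a (tilde a) = 0 := by rw [inner_comm']; exact ita
  have iet : inner (etilde n) (tilde a) = 0 := by rw [inner_comm']; exact ite
  have iea : inner (etilde n) a = 0 := by rw [inner_comm']; exact iae
  have hcoef : ∀ c0 c1 c2 c3 : ℝ,
      c0 • (1 : CD (n+1)) + c1 • tilde a + c2 • a + c3 • etilde n = 0 →
      c0 = 0 ∧ c1 = 0 ∧ c2 = 0 ∧ c3 = 0 := by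
    intro c0 c1 c2 c3 h
    have H : ∀ v : CD (n+1),
        inner v (c0 • (1 : CD (n+1)) + c1 • tilde a + c2 • a + c3 • etilde n) = 0 := by
      intro v; rw [h]; exact inner_zero_right' v
    have e0 := H 1; have e1 := H (tilde a); have e2 := H a; have e3 := H (etilde n)
    simp only [inner_add_right', inner_smul_right', i11, itt, hia, iee, i1t, i1a, i1e,
      ita, ite, iae, it1, ia1, ie1, iat, iet, iea, mul_one, mul_zero, add_zero, zero_add] at e0 e1 e2 e3
    exact ⟨e0, e1, e2, e3⟩
  have hker : ∀ q : ℍ, φ q = 0 → q = 0 := by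
    intro q h
    obtain ⟨h0, h1, h2, h3⟩ := hcoef q.re q.imI q.imJ q.imK h
    apply Quaternion.ext <;> simp [h0, h1, h2, h3]
  have hinj : Function.Injective φ := by
    intro p q h
    have hd : φ (p - q) = 0 := by
      rw [sub_eq_add_neg, hadd, ← neg_one_smul ℝ q, hsmul, h]
      simp
    have := hker _ hd
    exact sub_eq_zero.mp this
  set φL : ℍ →ₗ[ℝ] CD (n + 1) :=
    { toFun := φ, map_add' := hadd, map_smul' := fun r p => hsmul r p } with hφL
  have hspanH : Submodule.span ℝ
      ({1, qi, qj, qk} : Set ℍ) = ⊤ := by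
    rw [eq_top_iff]
    rintro q -
    have hq : q = q.re • (1 : ℍ) + q.imI • qi + q.imJ • qj + q.imK • qk := by
      apply Quaternion.ext <;> simp [Quaternion.re_smul, Quaternion.imI_smul,
          Quaternion.imJ_smul, Quaternion.imK_smul] <;> simp [qi, qj, qk]
    rw [hq]
    apply add_mem
    apply add_mem
    apply add_mem
    all_goals
      exact Submodule.smul_mem _ _ (Submodule.subset_span (by simp))
  have hrangeL : LinearMap.range φL = Submodule.span ℝ
      ({1, tilde a, a, etilde n} : Set (CD (n + 1))) := by
    rw [LinearMap.range_eq_map, ← hspanH, Submodule.map_span]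
    congr 1
    simp only [Set.image_insert_eq, Set.image_singleton]
    have c1 : φL 1 = 1 := hone
    have c2 : φL qi = tilde a := by simp [hφL, hφ, qi]
    have c3 : φL qj = a := by simp [hφL, hφ, qj]
    have c4 : φL qk = etilde n := by simp [hφL, hφ, qk]
    rw [c1, c2, c3, c4]
  have hrange : Set.range φ =
      (Submodule.span ℝ ({1, tilde a, a, etilde n} : Set (CD (n + 1))) :
        Set (CD (n + 1))) := by
    rw [← hrangeL]
    rfl
  have hfin : Module.finrank ℝ
      (Submodule.span ℝ ({1, tilde a, a, etilde n} : Set (CD (n + 1)))) = 4 := by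
    rw [← hrangeL, LinearMap.finrank_range_of_inj hinj]
    exact Quaternion.finrank_eq_four
  exact ⟨φ, fun q => rfl, hinj, hone, hmul, hadd, hsmul, hrange, hfin⟩

end CD


/-- For `n ≥ 3` and `a` doubly pure of norm one, the real-linear map
`ℍ → A n` with `1 ↦ e₀`, `i ↦ ã`, `j ↦ a`, `k ↦ ẽ₀` is an injective ℝ-algebra
homomorphism, and its image is the span of `{e₀, ã, a, ẽ₀}`, a 4-dimensional
subalgebra isomorphic to `ℍ`. -/
theorem quaternion_embedding_of_doublyPure (n : ℕ) (hn : 3 ≤ n + 1) (a : CD (n + 1))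
    (ha : CD.IsDoublyPure a) (hnorm : CD.norm a = 1) :
    ∃ φ : ℍ → CD (n + 1),
      (∀ q : ℍ, φ q =
        q.re • (1 : CD (n + 1)) + q.imI • CD.tilde a + q.imJ • a + q.imK • CD.etilde n) ∧
      Function.Injective φ ∧
      φ 1 = 1 ∧
      (∀ p q : ℍ, φ (p * q) = φ p * φ q) ∧
      (∀ p q : ℍ, φ (p + q) = φ p + φ q) ∧
      (∀ (r : ℝ) (p : ℍ), φ (r • p) = r • φ p) ∧
      Set.range φ =
        (Submodule.span ℝ
          ({(1 : CD (n + 1)), CD.tilde a, a, CD.etilde n} : Set (CD (n + 1))) : Set (CD (n + 1))) ∧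
      Module.finrank ℝ
        (Submodule.span ℝ
          ({(1 : CD (n + 1)), CD.tilde a, a, CD.etilde n} : Set (CD (n + 1)))) = 4 := by
  exact CD.main_aux n a ha hnorm
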